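/- A linear map D on the evolution algebra E_n (n ≥ 2, field of characteristic ≠ 2) is a derivation if and only if its matrix in the basis {e_1,...,e_n} has the block form [[0, 0], [0, D_0]] where D_0 is an antisymmetric (n−1)×(n−1) matrix (D_0 = −D_0ᵀ). Consequently, dim Der(E_n) = (n−1)(n−2)/2. -/

import Mathlib

open Module

/-- The evolution algebra `E_n` on `Fin (n+2) → F` (`n + 2 ≥ 2`):
`eᵢ² = e₀`, `eᵢeⱼ = 0` for `i ≠ j`. -/
def enMul {F : Type*} [Field F] {n : ℕ} (x y : Fin (n + 2) → F) : Fin (n + 2) → F :=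
  fun k => if k = 0 then ∑ i, x i * y i else 0

lemma enMul_add_left {F : Type*} [Field F] {n : ℕ} (x x' y : Fin (n + 2) → F) :
    enMul (x + x') y = enMul x y + enMul x' y := by
  funext k
  simp only [enMul, Pi.add_apply]
  split
  · rw [← Finset.sum_add_distrib]
    exact Finset.sum_congr rfl fun i _ => by ring
  · simp

lemma enMul_add_right {F : Type*} [Field F] {n : ℕ} (x y y' : Fin (n + 2) → F) :
    enMul x (y + y') = enMul x y + enMul x y' := by
  funext k
  simp only [enMul, Pi.add_apply]
  split
  · rw [← Finset.sum_add_distrib]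
    exact Finset.sum_congr rfl fun i _ => by ring
  · simp

lemma enMul_smul_left {F : Type*} [Field F] {n : ℕ} (c : F) (x y : Fin (n + 2) → F) :
    enMul (c • x) y = c • enMul x y := by
  funext k
  simp only [enMul, Pi.smul_apply, smul_eq_mul]
  split
  · rw [Finset.mul_sum]
    exact Finset.sum_congr rfl fun i _ => by ring
  · simp

lemma enMul_smul_right {F : Type*} [Field F] {n : ℕ} (c : F) (x y : Fin (n + 2) → F) :
    enMul x (c • y) = c • enMul x y := by
  funext k
  simp only [enMul, Pi.smul_apply, smul_eq_mul]
  split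
  · rw [Finset.mul_sum]
    exact Finset.sum_congr rfl fun i _ => by ring
  · simp

/-- The space of derivations of `E_n`. -/
def enDer (F : Type*) [Field F] (n : ℕ) :
    Submodule F ((Fin (n + 2) → F) →ₗ[F] (Fin (n + 2) → F)) where
  carrier := {D | ∀ x y, D (enMul x y) = enMul (D x) y + enMul x (D y)}
  add_mem' := by
    intro a b ha hb x y
    simp only [LinearMap.add_apply, ha x y, hb x y, enMul_add_left, enMul_add_right]
    abel
  zero_mem' := by
    intro x y
    have h1 : ∀ z : Fin (n + 2) → F, enMul (F := F) (n := n) 0 z = 0 := by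
      intro z; funext k; simp [enMul]
    have h2 : ∀ z : Fin (n + 2) → F, enMul (F := F) (n := n) z 0 = 0 := by
      intro z; funext k; simp [enMul]
    simp [h1, h2]
  smul_mem' := by
    intro c D hD x y
    simp only [LinearMap.smul_apply, hD x y, enMul_smul_left, enMul_smul_right, smul_add]

section Aux

variable {F : Type*} [Field F] {n : ℕ}

lemma two_ne_zero_of_ringChar (hchar : ringChar F ≠ 2) : (2 : F) ≠ 0 := by
  intro h0
  haveI := ringChar.charP F
  have hd : ringChar F ∣ 2 :=
    (CharP.cast_eq_zero_iff F (ringChar F) 2).mp (by exact_mod_cast h0)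
  rcases (Nat.dvd_prime Nat.prime_two).mp hd with h1 | h1
  · exact CharP.ringChar_ne_one h1
  · exact hchar h1

lemma enMul_eq (x y : Fin (n + 2) → F) :
    enMul x y = (∑ i, x i * y i) • (Pi.single 0 1 : Fin (n + 2) → F) := by
  funext k
  simp only [enMul, Pi.smul_apply, smul_eq_mul]
  by_cases hk : k = 0
  · subst hk; simp
  · simp [hk, Pi.single_eq_of_ne hk]

lemma enMul_single_right (x : Fin (n + 2) → F) (k : Fin (n + 2)) :
    enMul x (Pi.single k 1) = x k • (Pi.single 0 1 : Fin (n + 2) → F) := by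
  rw [enMul_eq]
  congr 1
  simp [Pi.single_apply]

lemma enMul_single_left (y : Fin (n + 2) → F) (k : Fin (n + 2)) :
    enMul (Pi.single k 1) y = y k • (Pi.single 0 1 : Fin (n + 2) → F) := by
  rw [enMul_eq]
  congr 1
  simp [Pi.single_apply]

lemma enMul_single_single (j k : Fin (n + 2)) :
    enMul (F := F) (n := n) (Pi.single j 1) (Pi.single k 1) =
      if j = k then (Pi.single 0 1 : Fin (n + 2) → F) else 0 := by
  rw [enMul_single_right]
  rcases eq_or_ne j k with rfl | h
  · simp
  · simp [Pi.single_eq_of_ne (Ne.symm h), h]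

lemma der_conditions (hchar : ringChar F ≠ 2)
    (D : (Fin (n + 2) → F) →ₗ[F] (Fin (n + 2) → F))
    (hD : ∀ x y, D (enMul x y) = enMul (D x) y + enMul x (D y)) :
    (∀ k : Fin (n + 2), D (Pi.single k 1) 0 = 0) ∧
    (∀ j : Fin (n + 2), D (Pi.single 0 1) j = 0) ∧
    (∀ j k : Fin (n + 2), j ≠ 0 → k ≠ 0 →
      D (Pi.single k 1) j = - D (Pi.single j 1) k) := by
  have h2 : (2 : F) ≠ 0 := two_ne_zero_of_ringChar hchar
  have hjj : ∀ j : Fin (n + 2), D (Pi.single 0 1) =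
      (2 * D (Pi.single j 1) j) • (Pi.single 0 1 : Fin (n + 2) → F) := by
    intro j
    have h := hD (Pi.single j 1) (Pi.single j 1)
    rw [enMul_single_single, if_pos rfl, enMul_single_right, enMul_single_left,
      ← add_smul] at h
    rw [h]; ring_nf
  have h0 : D (Pi.single 0 1) = 0 := by
    have ha : D (Pi.single 0 1) 0 = 0 := by
      have h := congrFun (hjj 0) 0
      simp only [Pi.smul_apply, Pi.single_eq_same, smul_eq_mul, mul_one] at h
      linear_combination -h
    funext m
    have h := congrFun (hjj 0) m
    rw [ha] at h
    simpa using h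
  have hdiag : ∀ j : Fin (n + 2), D (Pi.single j 1) j = 0 := by
    intro j
    have h := congrFun ((hjj j).symm.trans h0) 0
    simp only [Pi.smul_apply, Pi.single_eq_same, smul_eq_mul, mul_one, Pi.zero_apply] at h
    rcases mul_eq_zero.mp h with h | h
    · exact absurd h h2
    · exact h
  have hskew : ∀ j k : Fin (n + 2), j ≠ k →
      D (Pi.single j 1) k + D (Pi.single k 1) j = 0 := by
    intro j k hjk
    have h := hD (Pi.single j 1) (Pi.single k 1)
    rw [enMul_single_single, if_neg hjk, map_zero, enMul_single_right,
      enMul_single_left, ← add_smul] at h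
    have h' := congrFun h.symm 0
    simpa using h'
  refine ⟨?_, fun j => congrFun h0 j, ?_⟩
  · intro k
    rcases eq_or_ne k 0 with rfl | hk
    · exact congrFun h0 0
    · have h := hskew 0 k (Ne.symm hk)
      have h' : D (Pi.single 0 1) k = 0 := by simpa using congrFun h0 k
      linear_combination h - h'
  · intro j k hj hk
    rcases eq_or_ne j k with rfl | hjk
    · rw [hdiag]; simp
    · have h := hskew j k hjk
      linear_combination h

lemma der_of_conditions
    (D : (Fin (n + 2) → F) →ₗ[F] (Fin (n + 2) → F))
    (h1 : ∀ k : Fin (n + 2), D (Pi.single k 1) 0 = 0)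
    (h2 : ∀ j : Fin (n + 2), D (Pi.single 0 1) j = 0)
    (h3 : ∀ j k : Fin (n + 2), j ≠ 0 → k ≠ 0 →
      D (Pi.single k 1) j = - D (Pi.single j 1) k) :
    ∀ x y, D (enMul x y) = enMul (D x) y + enMul x (D y) := by
  have h0 : D (Pi.single 0 1) = 0 := funext h2
  have hskew : ∀ j k : Fin (n + 2),
      D (Pi.single k 1) j + D (Pi.single j 1) k = 0 := by
    intro j k
    rcases eq_or_ne j 0 with rfl | hj
    · rw [h2, h1, add_zero]
    · rcases eq_or_ne k 0 with rfl | hk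
      · rw [h2, h1, zero_add]
      · rw [h3 j k hj hk]; ring
  have hx : ∀ (z : Fin (n + 2) → F) (i : Fin (n + 2)),
      D z i = ∑ k, D (Pi.single k 1) i * z k := by
    intro z i
    have hz : z = ∑ k, z k • (Pi.single k 1 : Fin (n + 2) → F) := by
      funext m
      simp [Pi.single_apply]
    conv_lhs => rw [hz]
    rw [map_sum, Finset.sum_apply]
    refine Finset.sum_congr rfl fun k _ => ?_
    rw [map_smul]
    simp [mul_comm]
  intro x y
  rw [enMul_eq x y, map_smul, h0, smul_zero, enMul_eq (D x) y, enMul_eq x (D y),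
    ← add_smul]
  suffices hs : (∑ i, D x i * y i) + ∑ i, x i * D y i = 0 by
    rw [hs, zero_smul]
  have e1 : ∑ i, D x i * y i = ∑ i, ∑ k, D (Pi.single k 1) i * x k * y i := by
    refine Finset.sum_congr rfl fun i _ => ?_
    rw [hx x i, Finset.sum_mul]
  have e2 : ∑ i, x i * D y i = ∑ i, ∑ k, D (Pi.single i 1) k * x k * y i := by
    calc ∑ i, x i * D y i = ∑ i, ∑ k, D (Pi.single k 1) i * y k * x i := by
          refine Finset.sum_congr rfl fun i _ => ?_
          rw [hx y i, Finset.mul_sum]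
          exact Finset.sum_congr rfl fun k _ => by ring
      _ = ∑ k, ∑ i, D (Pi.single k 1) i * y k * x i := Finset.sum_comm
      _ = ∑ i, ∑ k, D (Pi.single i 1) k * x k * y i := by
          refine Finset.sum_congr rfl fun i _ => Finset.sum_congr rfl fun k _ => by ring
  rw [e1, e2, ← Finset.sum_add_distrib]
  refine Finset.sum_eq_zero fun i _ => ?_
  rw [← Finset.sum_add_distrib]
  refine Finset.sum_eq_zero fun k _ => ?_
  have h := hskew i k
  linear_combination (x k * y i) * h

lemma mem_enDer_iff (D : (Fin (n + 2) → F) →ₗ[F] (Fin (n + 2) → F)) :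
    D ∈ enDer F n ↔ ∀ x y, D (enMul x y) = enMul (D x) y + enMul x (D y) :=
  Iff.rfl

/-- Index set for the strictly upper-triangular entries. -/
abbrev SkewIdx (n : ℕ) := {p : Fin (n + 1) × Fin (n + 1) // p.1 < p.2}

noncomputable def derMatrixFun (f : SkewIdx n → F) :
    Fin (n + 2) → Fin (n + 2) → F := fun j k =>
  Fin.cases 0 (fun j' => Fin.cases 0 (fun k' =>
    if h : j' < k' then f ⟨(j', k'), h⟩
    else if h' : k' < j' then - f ⟨(k', j'), h'⟩ else 0) k) j

lemma derMatrixFun_zero_left (f : SkewIdx n → F) (k : Fin (n + 2)) :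
    derMatrixFun f 0 k = 0 := by
  simp [derMatrixFun]

lemma derMatrixFun_zero_right (f : SkewIdx n → F) (j : Fin (n + 2)) :
    derMatrixFun f j 0 = 0 := by
  induction j using Fin.cases <;> simp [derMatrixFun]

lemma derMatrixFun_succ_succ (f : SkewIdx n → F) (j k : Fin (n + 1)) :
    derMatrixFun f j.succ k.succ =
      if h : j < k then f ⟨(j, k), h⟩
      else if h' : k < j then - f ⟨(k, j), h'⟩ else 0 := by
  simp [derMatrixFun]

lemma derMatrixFun_skew (f : SkewIdx n → F) (j k : Fin (n + 2)) :
    derMatrixFun f j k = - derMatrixFun f k j := by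
  induction j using Fin.cases with
  | zero => rw [derMatrixFun_zero_left, derMatrixFun_zero_right, neg_zero]
  | succ j' =>
    induction k using Fin.cases with
    | zero => rw [derMatrixFun_zero_left, derMatrixFun_zero_right, neg_zero]
    | succ k' =>
      rw [derMatrixFun_succ_succ, derMatrixFun_succ_succ]
      rcases lt_trichotomy j' k' with h | h | h
      · rw [dif_pos h, dif_neg (not_lt.mpr h.le), dif_pos h, neg_neg]
      · subst h
        simp
      · rw [dif_neg (not_lt.mpr h.le), dif_pos h, dif_pos h]

lemma toLin'_single (M : Matrix (Fin (n + 2)) (Fin (n + 2)) F) (j k : Fin (n + 2)) :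
    Matrix.toLin' M (Pi.single k 1) j = M j k := by
  simp [Matrix.toLin'_apply, Matrix.mulVec, dotProduct, Pi.single_apply]

lemma derMatrix_mem (f : SkewIdx n → F) :
    Matrix.toLin' (Matrix.of (derMatrixFun f)) ∈ enDer F n := by
  rw [mem_enDer_iff]
  refine der_of_conditions _ ?_ ?_ ?_
  · intro k; rw [toLin'_single]; exact derMatrixFun_zero_left f k
  · intro j; rw [toLin'_single]; exact derMatrixFun_zero_right f j
  · intro j k _ _
    rw [toLin'_single, toLin'_single]
    exact derMatrixFun_skew f j k

noncomputable def derEquiv (F : Type*) [Field F] (hchar : ringChar F ≠ 2) (n : ℕ) :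
    enDer F n ≃ₗ[F] (SkewIdx n → F) where
  toFun D p := (D : (Fin (n + 2) → F) →ₗ[F] (Fin (n + 2) → F))
      (Pi.single p.1.2.succ 1) p.1.1.succ
  map_add' D E := by funext p; rfl
  map_smul' c D := by funext p; rfl
  invFun f := ⟨Matrix.toLin' (Matrix.of (derMatrixFun f)), derMatrix_mem f⟩
  left_inv D := by
    obtain ⟨c1, c2, c3⟩ := der_conditions hchar D.1 ((mem_enDer_iff D.1).mp D.2)
    have h2 : (2 : F) ≠ 0 := two_ne_zero_of_ringChar hchar
    have hdiag : ∀ j : Fin (n + 1), D.1 (Pi.single j.succ 1) j.succ = 0 := by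
      intro j
      have h := c3 j.succ j.succ (Fin.succ_ne_zero j) (Fin.succ_ne_zero j)
      have : 2 * D.1 (Pi.single j.succ 1) j.succ = 0 := by linear_combination h
      rcases mul_eq_zero.mp this with h' | h'
      · exact absurd h' h2
      · exact h'
    apply Subtype.ext
    apply (Pi.basisFun F (Fin (n + 2))).ext
    intro k
    funext j
    have hb : (Pi.basisFun F (Fin (n + 2))) k = Pi.single k 1 := by
      simp [Pi.basisFun_apply]
    rw [hb]
    show Matrix.toLin' (Matrix.of (derMatrixFun _)) (Pi.single k 1) j
        = D.1 (Pi.single k 1) j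
    rw [toLin'_single]
    rw [Matrix.of_apply]
    induction j using Fin.cases with
    | zero => rw [derMatrixFun_zero_left, c1 k]
    | succ j' =>
      induction k using Fin.cases with
      | zero => rw [derMatrixFun_zero_right, c2 j'.succ]
      | succ k' =>
        rw [derMatrixFun_succ_succ]
        rcases lt_trichotomy j' k' with h | h | h
        · rw [dif_pos h]
        · subst h
          rw [dif_neg (lt_irrefl _), dif_neg (lt_irrefl _), hdiag]
        · rw [dif_neg (not_lt.mpr h.le), dif_pos h,
            c3 j'.succ k'.succ (Fin.succ_ne_zero j') (Fin.succ_ne_zero k')]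
  right_inv f := by
    funext p
    obtain ⟨⟨a, b⟩, hab⟩ := p
    show Matrix.toLin' (Matrix.of (derMatrixFun f)) (Pi.single b.succ 1) a.succ = _
    rw [toLin'_single]
    show derMatrixFun f a.succ b.succ = _
    rw [derMatrixFun_succ_succ, dif_pos hab]

def pairsEquiv (n : ℕ) : SkewIdx n ≃ Σ k : Fin (n + 1), Fin k.val where
  toFun p := ⟨p.1.2, ⟨p.1.1.val, p.2⟩⟩
  invFun s := ⟨(⟨s.2.val, lt_trans s.2.isLt s.1.isLt⟩, s.1), s.2.isLt⟩
  left_inv _ := rfl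
  right_inv _ := rfl

lemma card_skewIdx (n : ℕ) : Fintype.card (SkewIdx n) = (n + 1) * n / 2 := by
  rw [Fintype.card_congr (pairsEquiv n), Fintype.card_sigma]
  simp only [Fintype.card_fin]
  rw [Fin.sum_univ_eq_sum_range (fun i => i), Finset.sum_range_id]
  simp

end Aux

/-- **Derivations of `E_n`.** Over a field of characteristic `≠ 2`, a linear map `D`
is a derivation of `E_n` iff its matrix `(d j k) = D(eₖ) j` has zero first row and
first column and is antisymmetric on the remaining block; consequently
`dim Der(E_n) = (n-1)(n-2)/2` (here the dimension is `n + 2`). -/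
theorem stmt_9 (F : Type*) [Field F] (hchar : ringChar F ≠ 2) (n : ℕ)
    (D : (Fin (n + 2) → F) →ₗ[F] (Fin (n + 2) → F)) :
    ((∀ x y, D (enMul x y) = enMul (D x) y + enMul x (D y)) ↔
      ((∀ k : Fin (n + 2), D (Pi.single k 1) 0 = 0) ∧
       (∀ j : Fin (n + 2), D (Pi.single 0 1) j = 0) ∧
       (∀ j k : Fin (n + 2), j ≠ 0 → k ≠ 0 →
          D (Pi.single k 1) j = - D (Pi.single j 1) k))) ∧
    finrank F (enDer F n) = ((n + 2) - 1) * ((n + 2) - 2) / 2 := by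
  constructor
  · exact ⟨der_conditions hchar D, fun h => der_of_conditions D h.1 h.2.1 h.2.2⟩
  · rw [LinearEquiv.finrank_eq (derEquiv F hchar n), Module.finrank_pi, card_skewIdx]
    simp
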